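/- For all a ∈ ℂ, a ≠ 0, and n ≥ 0, the Charlier polynomials satisfy (a−n−1)·C_n(x;a) + a·(C_{n+1}(x;a) − C_n(x;a)) = a·C_{n+1}(x+1;a). -/

import Mathlib

open Finset

noncomputable def poch (a : ℂ) (k : ℕ) : ℂ := ∏ i ∈ Finset.range k, (a + i)

/-- Charlier polynomial `C_n(x;a)`. -/
noncomputable def charlier (n : ℕ) (a x : ℂ) : ℂ :=
  ∑ k ∈ Finset.range (n + 1),
    poch (-(n : ℂ)) k * poch (-x) k / (k.factorial : ℂ) * (-1 / a) ^ k

lemma poch_succ' (b : ℂ) (k : ℕ) : poch b (k+1) = b * poch (b+1) k := by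
  unfold poch
  rw [Finset.prod_range_succ']
  simp only [Nat.cast_zero, add_zero]
  rw [mul_comm]
  congr 1
  refine Finset.prod_congr rfl fun i _ => ?_
  push_cast; ring

lemma poch_succ (b : ℂ) (k : ℕ) : poch b (k+1) = poch b k * (b + k) :=
  Finset.prod_range_succ _ _

theorem charlier_forward_shift (a x : ℂ) (ha : a ≠ 0) (n : ℕ) :
    (a - n - 1) * charlier n a x + a * (charlier (n + 1) a x - charlier n a x) =
      a * charlier (n + 1) a (x + 1) := by
  have key : a * charlier (n+1) a x - a * charlier (n+1) a (x+1)
      = ((n:ℂ)+1) * charlier n a x := by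
    unfold charlier
    rw [← mul_sub, ← Finset.sum_sub_distrib, Finset.mul_sum, Finset.mul_sum,
      Finset.sum_range_succ']
    have h0 : a * (poch (-((n:ℕ)+1 : ℕ) : ℂ) 0 * poch (-x) 0 / (Nat.factorial 0 : ℂ) * (-1/a)^0
        - poch (-((n:ℕ)+1 : ℕ) : ℂ) 0 * poch (-(x+1)) 0 / (Nat.factorial 0 : ℂ) * (-1/a)^0) = 0 := by
      simp [poch]
    rw [h0, add_zero]
    refine Finset.sum_congr rfl fun k _ => ?_
    have hn : poch (-(((n:ℕ)+1 : ℕ) : ℂ)) (k+1) = (-((n:ℂ)+1)) * poch (-(n:ℂ)) k := by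
      rw [poch_succ']
      push_cast
      ring_nf
    have hx1 : poch (-(x+1)) (k+1) = (-(x+1)) * poch (-x) k := by
      rw [poch_succ']
      ring_nf
    have hx : poch (-x) (k+1) = poch (-x) k * (-x + k) := poch_succ _ _
    rw [hn, hx1, hx, Nat.factorial_succ, pow_succ]
    have hf : ((k.factorial : ℂ)) ≠ 0 := Nat.cast_ne_zero.mpr k.factorial_ne_zero
    have hk1 : ((k:ℂ)+1) ≠ 0 := by
      exact_mod_cast Nat.succ_ne_zero k
    push_cast
    have hpow : a * ((-1/a) ^ k * (-1/a)) = -((-1/a) ^ k) := by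
      field_simp
    have hcancel : (-((n:ℂ)+1) * poch (-(n:ℂ)) k * poch (-x) k) * ((k:ℂ)+1)
        / (((k:ℂ)+1) * (k.factorial:ℂ))
        = (-((n:ℂ)+1) * poch (-(n:ℂ)) k * poch (-x) k) / (k.factorial:ℂ) := by
      rw [mul_comm ((k:ℂ)+1) (k.factorial:ℂ), mul_div_mul_right _ _ hk1]
    trans ((-((n:ℂ)+1) * poch (-(n:ℂ)) k * poch (-x) k) * ((k:ℂ)+1)
        / (((k:ℂ)+1) * (k.factorial:ℂ)) * (a * ((-1/a) ^ k * (-1/a))))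
    · ring
    · rw [hpow, hcancel]; ring
  linear_combination key
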